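/- Let G be the group ℤ ⋊ ℤ generated by x, y with relation x y x⁻¹ = y⁻¹. Then the set {b ∈ G : there exists a ∈ G with a b a⁻¹ = b⁻¹} equals the subgroup generated by y. -/

import Mathlib

/-- The group `ℤ ⋊ ℤ` where the generator of the second factor acts on the first by
negation (multiplicatively: `x y x⁻¹ = y⁻¹`). -/
abbrev Zm := Multiplicative ℤ

/-- The automorphism of inversion. -/
def negAut : MulAut Zm := MulEquiv.inv Zm

/-- The action of the second factor: the generator acts by inversion. -/
def phi : Zm →* MulAut Zm := zpowersHom (MulAut Zm) negAut

/-- The semidirect product `ℤ ⋊ ℤ` with relation `x y x⁻¹ = y⁻¹`. -/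
abbrev Gsd := Zm ⋊[phi] Zm

/-- The generator of the acting copy of `ℤ`. -/
def xg : Gsd := SemidirectProduct.inr (Multiplicative.ofAdd 1)

/-- The generator of the normal copy of `ℤ`. -/
def yg : Gsd := SemidirectProduct.inl (Multiplicative.ofAdd 1)

lemma yg_zpow (k : ℤ) : yg ^ k = SemidirectProduct.inl (Multiplicative.ofAdd k) := by
  rw [yg, ← map_zpow]
  congr 1
  rw [← ofAdd_zsmul]
  norm_num

/-- In `ℤ ⋊ ℤ` (with `x y x⁻¹ = y⁻¹`), the set of elements conjugate to their own
inverse is exactly the subgroup generated by `y`. -/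
theorem stmt5 : {b : Gsd | ∃ a : Gsd, a * b * a⁻¹ = b⁻¹} = (Subgroup.zpowers yg : Set Gsd) := by
  ext b
  simp only [Set.mem_setOf_eq, SetLike.mem_coe, Subgroup.mem_zpowers_iff]
  constructor
  · rintro ⟨a, ha⟩
    have hr := congrArg SemidirectProduct.rightHom ha
    simp only [map_mul, map_inv, SemidirectProduct.rightHom_eq_right] at hr
    have hbr : b.right = 1 := by
      rw [mul_right_comm, mul_inv_cancel, one_mul] at hr
      have h2 := congrArg Multiplicative.toAdd hr
      simp only [toAdd_inv] at h2
      have : Multiplicative.toAdd b.right = 0 := by omega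
      simpa using congrArg Multiplicative.ofAdd this
    refine ⟨Multiplicative.toAdd b.left, ?_⟩
    rw [yg_zpow]
    ext <;> simp [hbr]
  · rintro ⟨k, rfl⟩
    refine ⟨xg, ?_⟩
    rw [yg_zpow]
    ext
    · simp [xg]
      simp [phi, negAut]
    · simp [xg]
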